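/- Let (X,r) be a left non-degenerate solution of the Yang–Baxter equation and define s: X × X → X × X by s(x,y) = (y, σ_y(x)), where σ_y(x) = λ_y(ρ_{λ_x^{-1}(y)}(x)). Then (X,s) is a left non-degenerate solution of the Yang–Baxter equation. Moreover, (X,r) is bijective if and only if (X,s) is bijective, if and only if (X,s) is right non-degenerate. -/
import Mathlib

def sigmaMap {X : Type*} (lam : X → Equiv.Perm X) (rho : X → X → X) (z x : X) : X :=
  lam z (rho ((lam x).symm z) x)

/-- `r × id` acting on `X × X × X`. -/
def rOnFirstTwo {X : Type*} (r : X × X → X × X) : X × X × X → X × X × X :=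
  fun t => ((r (t.1, t.2.1)).1, (r (t.1, t.2.1)).2, t.2.2)

/-- `id × r` acting on `X × X × X`. -/
def rOnLastTwo {X : Type*} (r : X × X → X × X) : X × X × X → X × X × X :=
  fun t => (t.1, (r (t.2.1, t.2.2)).1, (r (t.2.1, t.2.2)).2)

/-- The set-theoretic Yang–Baxter equation for a map `X × X → X × X`. -/
def IsYBSolution {X : Type*} (r : X × X → X × X) : Prop :=
  rOnFirstTwo r ∘ rOnLastTwo r ∘ rOnFirstTwo r =
    rOnLastTwo r ∘ rOnFirstTwo r ∘ rOnLastTwo r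

lemma yb_comp {X : Type*} (lam : X → Equiv.Perm X) (rho : X → X → X)
    (hYB : IsYBSolution (fun p : X × X => (lam p.1 p.2, rho p.2 p.1)))
    (x y z : X) :
    lam (lam x y) (lam (rho y x) z) = lam x (lam y z) ∧
    rho (lam (rho y x) z) (lam x y) = lam (rho (lam y z) x) (rho z y) ∧
    rho z (rho y x) = rho (rho z y) (rho (lam y z) x) := by
  have h := congrFun hYB (x, y, z)
  simp only [rOnFirstTwo, rOnLastTwo, Function.comp_apply, Prod.mk.injEq] at h
  exact h

lemma shelf {X : Type*} (lam : X → Equiv.Perm X) (rho : X → X → X)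
    (hYB : IsYBSolution (fun p : X × X => (lam p.1 p.2, rho p.2 p.1)))
    (u v w : X) :
    sigmaMap lam rho w (sigmaMap lam rho v u)
      = sigmaMap lam rho (sigmaMap lam rho w v) (sigmaMap lam rho w u) := by
  have hA : ∀ x y z, lam (lam x y) (lam (rho y x) z) = lam x (lam y z) :=
    fun x y z => (yb_comp lam rho hYB x y z).1
  have hB : ∀ x y z, rho (lam (rho y x) z) (lam x y) = lam (rho (lam y z) x) (rho z y) :=
    fun x y z => (yb_comp lam rho hYB x y z).2.1
  have hC : ∀ x y z, rho z (rho y x) = rho (rho z y) (rho (lam y z) x) :=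
    fun x y z => (yb_comp lam rho hYB x y z).2.2
  obtain ⟨p, rfl⟩ : ∃ p, lam u p = v := ⟨(lam u).symm v, by simp⟩
  obtain ⟨q', rfl⟩ : ∃ q', lam u (lam p q') = w :=
    ⟨(lam p).symm ((lam u).symm w), by simp⟩
  set q := lam p q' with hq
  set m := rho q' p with hm
  have hσvu : sigmaMap lam rho (lam u p) u = lam (lam u p) (rho p u) := by
    simp [sigmaMap]
  have hσwu : sigmaMap lam rho (lam u q) u = lam (lam u q) (rho q u) := by
    simp [sigmaMap]
  have h3 : (lam (lam u p)).symm (lam u q) = lam (rho p u) q' := by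
    apply (lam (lam u p)).injective
    simp [hA u p q', hq]
  have hσwv : sigmaMap lam rho (lam u q) (lam u p) = lam u (lam q m) := by
    rw [sigmaMap, h3, hB u p q', ← hq, hA u q m, hm]
  have h5 : ∀ (a : X) (z : X),
      (lam (lam (lam u a) (rho a u))).symm (lam u (lam a z))
        = lam (rho (rho a u) (lam u a)) z := by
    intro a z
    apply (lam (lam (lam u a) (rho a u))).injective
    rw [Equiv.apply_symm_apply, hA (lam u a) (rho a u) z, hA u a z]
  have hL : sigmaMap lam rho (lam u q) (lam (lam u p) (rho p u))
      = lam (lam u q) (lam (lam (rho q u) m) (rho m (rho q u))) := by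
    rw [sigmaMap]
    have h6 : (lam (lam (lam u p) (rho p u))).symm (lam u q)
        = lam (rho (rho p u) (lam u p)) q' := by rw [hq]; exact h5 p q'
    rw [h6, hB (lam u p) (rho p u) q']
    rw [hB u p q', ← hq, hC u p q', ← hq, ← hm]
  have hR : sigmaMap lam rho (lam u (lam q m)) (lam (lam u q) (rho q u))
      = lam (lam u q) (lam (lam (rho q u) m) (rho m (rho q u))) := by
    rw [sigmaMap]
    rw [h5 q m, hB (lam u q) (rho q u) m]
    have hV : lam u (lam q m) = lam (lam u q) (lam (rho q u) m) := (hA u q m).symm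
    rw [hV, hA (lam u q) (lam (rho q u) m) (rho m (rho q u))]
  rw [hσvu, hσwu, hσwv, hL, hR]

theorem stmt3 {X : Type*} (lam : X → Equiv.Perm X) (rho : X → X → X)
    (hYB : IsYBSolution (fun p : X × X => (lam p.1 p.2, rho p.2 p.1)))
    (s : X × X → X × X)
    (hs : ∀ x y : X, s (x, y) = (y, sigmaMap lam rho y x)) :
    IsYBSolution s ∧
    (∀ x : X, Function.Bijective fun y => (s (x, y)).1) ∧
    (Function.Bijective (fun p : X × X => (lam p.1 p.2, rho p.2 p.1)) ↔
      Function.Bijective s) ∧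
    (Function.Bijective s ↔ ∀ y : X, Function.Bijective (sigmaMap lam rho y)) := by
  set r : X × X → X × X := fun p => (lam p.1 p.2, rho p.2 p.1) with hr
  refine ⟨?_, ?_, ?_, ?_⟩
  · -- YBE for s
    funext t
    obtain ⟨x, y, z⟩ := t
    simp only [Function.comp_apply, rOnFirstTwo, rOnLastTwo, hs]
    rw [shelf lam rho hYB x y z]
  · intro x
    have : (fun y => (s (x, y)).1) = id := by funext y; rw [hs]; rfl
    rw [this]; exact Function.bijective_id
  · -- r bijective iff s bijective
    let F : X × X ≃ X × X :=
      { toFun := fun p => (p.1, lam p.1 p.2)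
        invFun := fun p => (p.1, (lam p.1).symm p.2)
        left_inv := fun p => by simp
        right_inv := fun p => by simp }
    have hconj : s = F ∘ r ∘ F.symm := by
      funext p
      obtain ⟨x, y⟩ := p
      simp only [Function.comp_apply, hr, F, Equiv.coe_fn_mk, Equiv.coe_fn_symm_mk, hs,
        sigmaMap]
      simp
    constructor
    · intro h
      rw [hconj]
      exact F.bijective.comp (h.comp F.symm.bijective)
    · intro h
      have : r = F.symm ∘ s ∘ F := by
        rw [hconj]; funext p; simp
      rw [this]
      exact F.symm.bijective.comp (h.comp F.bijective)
  · constructor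
    · intro h y
      constructor
      · intro a b hab
        have := h.1 (show s (a, y) = s (b, y) by rw [hs, hs, hab])
        injection this with h1 h2
      · intro c
        obtain ⟨⟨a, b⟩, hab⟩ := h.2 (y, c)
        rw [hs] at hab
        injection hab with h1 h2
        subst h1
        exact ⟨a, h2⟩
    · intro h
      constructor
      · rintro ⟨x1, y1⟩ ⟨x2, y2⟩ hxy
        rw [hs, hs] at hxy
        injection hxy with h1 h2
        subst h1
        exact Prod.ext ((h y1).1 h2) rfl
      · rintro ⟨a, b⟩
        obtain ⟨x, hx⟩ := (h a).2 b
        exact ⟨(x, a), by rw [hs, hx]⟩
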